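/- For every source class (p_θ)_{θ∈Θ} on 𝒳^ℓ, the minimax batch regret is bounded below by the conditional capacity: min over batch predictors p̂ of sup_{θ∈Θ} R(p̂,θ) ≥ sup over prior probability measures w on Θ of I_w(θ;Y|X^n). -/

import Mathlib

open MeasureTheory Real Filter

/-- `q` is a probability mass function on the finite type `B`. -/
def IsPMF {B : Type*} [Fintype B] (q : B → ℝ) : Prop :=
  (∀ y, 0 ≤ q y) ∧ ∑ y, q y = 1

/-- Probability of a tuple of `n` i.i.d. batches: `p_θ(x^n) = ∏ i, p_θ(x_i)`. -/
def prodP {Θ B : Type*} (p : Θ → B → ℝ) (n : ℕ) (θ : Θ) (x : Fin n → B) : ℝ :=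
  ∏ i, p θ (x i)

/-- The batch regret `R(p̂,θ) = Σ_{x^n} p_θ(x^n) Σ_y p_θ(y) log (p_θ(y) / p̂(y|x^n))`. -/
noncomputable def batchRegret {Θ B : Type*} [Fintype B] (p : Θ → B → ℝ) (n : ℕ)
    (phat : (Fin n → B) → B → ℝ) (θ : Θ) : ℝ :=
  ∑ x : Fin n → B, prodP p n θ x * ∑ y : B, p θ y * Real.log (p θ y / phat x y)

/-- The conditional mixture predictor
`p̂_w(y|x^n) = ∫ p_θ(y) w(dθ|x^n) = (∫ p_θ(x^n) p_θ(y) w(dθ)) / (∫ p_θ(x^n) w(dθ))`. -/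
noncomputable def mixPred {Θ B : Type*} [MeasurableSpace Θ] [Fintype B]
    (p : Θ → B → ℝ) (n : ℕ) (w : Measure Θ) (x : Fin n → B) (y : B) : ℝ :=
  (∫ θ, prodP p n θ x * p θ y ∂w) / (∫ θ, prodP p n θ x ∂w)

/-- The conditional mutual information
`I_w(θ;Y|X^n) = E[log (p_θ(Y) / p_w(Y|X^n))]`, the expectation being over the joint law
`w(dθ) p_θ(x^n) p_θ(y)`. -/
noncomputable def condMI {Θ B : Type*} [MeasurableSpace Θ] [Fintype B]
    (p : Θ → B → ℝ) (n : ℕ) (w : Measure Θ) : ℝ :=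
  ∫ θ, (∑ x : Fin n → B, prodP p n θ x *
    ∑ y : B, p θ y * Real.log (p θ y / mixPred p n w x y)) ∂w

/-- The minimax batch regret is bounded below by the conditional capacity:
for every (everywhere positive) batch predictor `p̂` and every prior probability measure `w`
on `Θ`, `sup_{θ∈Θ} R(p̂,θ) ≥ I_w(θ;Y|X^n)` (stated via upper bounds: any upper bound `C` of
`θ ↦ R(p̂,θ)` satisfies `C ≥ I_w(θ;Y|X^n)`). -/
lemma integrable_of_bdd {Θ : Type*} [MeasurableSpace Θ] {w : Measure Θ} [IsFiniteMeasure w]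
    {f : Θ → ℝ} (hm : Measurable f) (c : ℝ) (hb : ∀ θ, |f θ| ≤ c) :
    Integrable f w :=
  (integrable_const c).mono' hm.aestronglyMeasurable
    (Filter.Eventually.of_forall (fun θ => by simpa using hb θ))

lemma abs_mul_log_le_one' {x : ℝ} (h0 : 0 ≤ x) (h1 : x ≤ 1) : |x * Real.log x| ≤ 1 := by
  rcases eq_or_lt_of_le h0 with h | h
  · simp [← h]
  · have hlog : Real.log x ≤ 0 := Real.log_nonpos h0 h1
    rw [abs_le]
    constructor
    · have h2 : Real.log x⁻¹ ≤ x⁻¹ - 1 := Real.log_le_sub_one_of_pos (by positivity)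
      rw [Real.log_inv] at h2
      nlinarith [mul_le_mul_of_nonneg_left h2 h0, mul_inv_cancel₀ (ne_of_gt h)]
    · nlinarith [mul_nonpos_of_nonneg_of_nonpos h0 hlog]

lemma term_bound' {x c : ℝ} (h0 : 0 ≤ x) (h1 : x ≤ 1) (hc : 0 < c) :
    |x * Real.log (x / c)| ≤ 1 + |Real.log c| := by
  have key : x * Real.log (x / c) = x * Real.log x - x * Real.log c := by
    rcases eq_or_lt_of_le h0 with h | h
    · simp [← h]
    · rw [Real.log_div (ne_of_gt h) (ne_of_gt hc)]; ring
  rw [key]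
  calc |x * Real.log x - x * Real.log c| ≤ |x * Real.log x| + |x * Real.log c| := abs_sub _ _
    _ ≤ 1 + |Real.log c| := by
        have := abs_mul_log_le_one' h0 h1
        have h2 : |x * Real.log c| ≤ |Real.log c| := by
          rw [abs_mul]
          calc |x| * |Real.log c| ≤ 1 * |Real.log c| := by
                apply mul_le_mul_of_nonneg_right _ (abs_nonneg _)
                rwa [abs_of_nonneg h0]
            _ = |Real.log c| := one_mul _
        linarith

theorem minimax_regret_ge_capacity
    {𝒳 Θ : Type*} [Fintype 𝒳] [Nonempty 𝒳] [MeasurableSpace Θ]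
    (ℓ n : ℕ) (hℓ : 0 < ℓ) (hn : 0 < n)
    (p : Θ → (Fin ℓ → 𝒳) → ℝ)
    (hp : ∀ θ, IsPMF (p θ))
    (hmeas : ∀ z : Fin ℓ → 𝒳, Measurable fun θ => p θ z)
    (phat : (Fin n → Fin ℓ → 𝒳) → (Fin ℓ → 𝒳) → ℝ)
    (hphat : ∀ x, IsPMF (phat x))
    (hpos : ∀ x y, 0 < phat x y)
    (w : Measure Θ) [IsProbabilityMeasure w]
    (C : ℝ) (hC : ∀ θ : Θ, batchRegret p n phat θ ≤ C) :
    condMI p n w ≤ C := by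
  classical
  -- basic bounds
  have hp0 : ∀ θ y, 0 ≤ p θ y := fun θ => (hp θ).1
  have hp1 : ∀ θ y, p θ y ≤ 1 := by
    intro θ y
    calc p θ y ≤ ∑ z, p θ z := Finset.single_le_sum (fun z _ => hp0 θ z) (Finset.mem_univ y)
      _ = 1 := (hp θ).2
  have hq0 : ∀ θ x, 0 ≤ prodP p n θ x := fun θ x => Finset.prod_nonneg fun i _ => hp0 θ _
  have hq1 : ∀ θ x, prodP p n θ x ≤ 1 :=
    fun θ x => Finset.prod_le_one (fun i _ => hp0 θ _) (fun i _ => hp1 θ _)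
  have hqm : ∀ x, Measurable fun θ => prodP p n θ x :=
    fun x => Finset.measurable_prod _ fun i _ => hmeas _
  -- J and M
  set J : (Fin n → Fin ℓ → 𝒳) → (Fin ℓ → 𝒳) → ℝ :=
    fun x y => ∫ θ, prodP p n θ x * p θ y ∂w with hJdef
  set M : (Fin n → Fin ℓ → 𝒳) → ℝ := fun x => ∫ θ, prodP p n θ x ∂w with hMdef
  have hmix : ∀ x y, mixPred p n w x y = J x y / M x := fun x y => rfl
  have hJint : ∀ x y, Integrable (fun θ => prodP p n θ x * p θ y) w := by
    intro x y
    refine integrable_of_bdd ((hqm x).mul (hmeas y)) 1 (fun θ => ?_)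
    rw [abs_of_nonneg (mul_nonneg (hq0 θ x) (hp0 θ y))]
    exact mul_le_one₀ (hq1 θ x) (hp0 θ y) (hp1 θ y)
  have hJ0 : ∀ x y, 0 ≤ J x y :=
    fun x y => integral_nonneg fun θ => mul_nonneg (hq0 θ x) (hp0 θ y)
  have hM0 : ∀ x, 0 ≤ M x := fun x => integral_nonneg fun θ => hq0 θ x
  have hsumJ : ∀ x, ∑ y, J x y = M x := by
    intro x
    rw [hJdef, hMdef]
    rw [← integral_finset_sum _ (fun y _ => hJint x y)]
    congr 1; funext θ
    rw [← Finset.mul_sum, (hp θ).2, mul_one]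
  have hJleM : ∀ x y, J x y ≤ M x := by
    intro x y
    rw [← hsumJ x]
    exact Finset.single_le_sum (fun z _ => hJ0 x z) (Finset.mem_univ y)
  -- a.e. nondegeneracy
  have hae : ∀ᵐ θ ∂w, ∀ x y, J x y = 0 → prodP p n θ x * p θ y = 0 := by
    rw [ae_all_iff]; intro x; rw [ae_all_iff]; intro y
    by_cases hj : J x y = 0
    · have h0 : (fun θ => prodP p n θ x * p θ y) =ᵐ[w] 0 := by
        rw [← integral_eq_zero_iff_of_nonneg
          (fun θ => mul_nonneg (hq0 θ x) (hp0 θ y)) (hJint x y)]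
        exact hj
      filter_upwards [h0] with θ h _
      exact h
    · filter_upwards with θ h; exact absurd h hj
  -- the three integrands
  set G : Θ → ℝ := fun θ => ∑ x, ∑ y,
    prodP p n θ x * (p θ y * Real.log (p θ y / phat x y)) with hGdef
  set D : Θ → ℝ := fun θ => ∑ x, ∑ y,
    prodP p n θ x * p θ y * (Real.log (phat x y) - Real.log (mixPred p n w x y)) with hDdef
  set F : Θ → ℝ := fun θ => ∑ x, ∑ y,
    prodP p n θ x * (p θ y * Real.log (p θ y / mixPred p n w x y)) with hFdef
  have hcondMI : condMI p n w = ∫ θ, F θ ∂w := by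
    unfold condMI
    congr 1; funext θ
    rw [hFdef]
    exact Finset.sum_congr rfl fun x _ => Finset.mul_sum _ _ _
  have hG_reg : ∀ θ, G θ = batchRegret p n phat θ := by
    intro θ
    unfold batchRegret
    rw [hGdef]
    exact Finset.sum_congr rfl fun x _ => (Finset.mul_sum _ _ _).symm
  -- integrability of G and D
  have hGint : Integrable G w := by
    rw [hGdef]
    apply integrable_finset_sum
    intro x _
    apply integrable_finset_sum
    intro y _
    refine integrable_of_bdd
      ((hqm x).mul ((hmeas y).mul (Real.measurable_log.comp ((hmeas y).div_const _))))
      (1 + |Real.log (phat x y)|) (fun θ => ?_)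
    rw [abs_mul]
    calc |prodP p n θ x| * |p θ y * Real.log (p θ y / phat x y)|
        ≤ 1 * (1 + |Real.log (phat x y)|) := by
          apply mul_le_mul
          · rw [abs_of_nonneg (hq0 θ x)]; exact hq1 θ x
          · exact term_bound' (hp0 θ y) (hp1 θ y) (hpos x y)
          · exact abs_nonneg _
          · norm_num
      _ = 1 + |Real.log (phat x y)| := one_mul _
  have hDint : Integrable D w := by
    rw [hDdef]
    apply integrable_finset_sum
    intro x _
    apply integrable_finset_sum
    intro y _
    refine integrable_of_bdd (((hqm x).mul (hmeas y)).mul_const _)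
      (|Real.log (phat x y) - Real.log (mixPred p n w x y)|) (fun θ => ?_)
    rw [abs_mul]
    calc |prodP p n θ x * p θ y| * |Real.log (phat x y) - Real.log (mixPred p n w x y)|
        ≤ 1 * |Real.log (phat x y) - Real.log (mixPred p n w x y)| := by
          apply mul_le_mul_of_nonneg_right _ (abs_nonneg _)
          rw [abs_of_nonneg (mul_nonneg (hq0 θ x) (hp0 θ y))]
          exact mul_le_one₀ (hq1 θ x) (hp0 θ y) (hp1 θ y)
      _ = _ := one_mul _
  -- a.e. decomposition F = G + D
  have hFGD : F =ᵐ[w] fun θ => G θ + D θ := by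
    filter_upwards [hae] with θ hθ
    rw [hFdef, hGdef, hDdef]
    rw [← Finset.sum_add_distrib]
    refine Finset.sum_congr rfl fun x _ => ?_
    rw [← Finset.sum_add_distrib]
    refine Finset.sum_congr rfl fun y _ => ?_
    by_cases h0 : prodP p n θ x * p θ y = 0
    · rcases mul_eq_zero.mp h0 with h | h <;> simp [h, h0]
    · have hqpos : prodP p n θ x ≠ 0 := fun h => h0 (by rw [h, zero_mul])
      have hppos : p θ y ≠ 0 := fun h => h0 (by rw [h, mul_zero])
      have hJpos : 0 < J x y := by
        rcases eq_or_lt_of_le (hJ0 x y) with h | h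
        · exact absurd (hθ x y h.symm) h0
        · exact h
      have hMpos : 0 < M x := lt_of_lt_of_le hJpos (hJleM x y)
      have hmixpos : 0 < mixPred p n w x y := by
        rw [hmix]; exact div_pos hJpos hMpos
      rw [Real.log_div hppos (ne_of_gt hmixpos), Real.log_div hppos (ne_of_gt (hpos x y))]
      ring
  -- the Gibbs inequality: ∫ D ≤ 0
  have hDval : ∫ θ, D θ ∂w =
      ∑ x, ∑ y, J x y * (Real.log (phat x y) - Real.log (mixPred p n w x y)) := by
    rw [hDdef]
    rw [integral_finset_sum _ (fun x _ => integrable_finset_sum _ (fun y _ =>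
      integrable_of_bdd (f := fun θ => prodP p n θ x * p θ y * (Real.log (phat x y) - Real.log (mixPred p n w x y))) (((hqm x).mul (hmeas y)).mul_const _)
        (|Real.log (phat x y) - Real.log (mixPred p n w x y)|) (fun θ => by
          rw [abs_mul]
          calc |prodP p n θ x * p θ y| * |Real.log (phat x y) - Real.log (mixPred p n w x y)|
              ≤ 1 * |Real.log (phat x y) - Real.log (mixPred p n w x y)| := by
                apply mul_le_mul_of_nonneg_right _ (abs_nonneg _)
                rw [abs_of_nonneg (mul_nonneg (hq0 θ x) (hp0 θ y))]
                exact mul_le_one₀ (hq1 θ x) (hp0 θ y) (hp1 θ y)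
            _ = _ := one_mul _)))]
    refine Finset.sum_congr rfl fun x _ => ?_
    rw [integral_finset_sum _ (fun y _ =>
      integrable_of_bdd (f := fun θ => prodP p n θ x * p θ y * (Real.log (phat x y) - Real.log (mixPred p n w x y))) (((hqm x).mul (hmeas y)).mul_const _)
        (|Real.log (phat x y) - Real.log (mixPred p n w x y)|) (fun θ => by
          rw [abs_mul]
          calc |prodP p n θ x * p θ y| * |Real.log (phat x y) - Real.log (mixPred p n w x y)|
              ≤ 1 * |Real.log (phat x y) - Real.log (mixPred p n w x y)| := by
                apply mul_le_mul_of_nonneg_right _ (abs_nonneg _)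
                rw [abs_of_nonneg (mul_nonneg (hq0 θ x) (hp0 θ y))]
                exact mul_le_one₀ (hq1 θ x) (hp0 θ y) (hp1 θ y)
            _ = _ := one_mul _))]
    refine Finset.sum_congr rfl fun y _ => ?_
    rw [integral_mul_const]
  have hGibbs : ∑ x, ∑ y,
      J x y * (Real.log (phat x y) - Real.log (mixPred p n w x y)) ≤ 0 := by
    have hterm : ∀ x y,
        J x y * (Real.log (phat x y) - Real.log (mixPred p n w x y))
          ≤ M x * phat x y - J x y := by
      intro x y
      by_cases hj : J x y = 0
      · rw [hj]
        simp only [zero_mul, sub_zero]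
        exact mul_nonneg (hM0 x) (le_of_lt (hpos x y))
      · have hJpos : 0 < J x y := lt_of_le_of_ne (hJ0 x y) (Ne.symm hj)
        have hMpos : 0 < M x := lt_of_lt_of_le hJpos (hJleM x y)
        have heq : Real.log (phat x y) - Real.log (mixPred p n w x y)
            = Real.log (M x * phat x y / J x y) := by
          rw [hmix, Real.log_div (ne_of_gt hJpos) (ne_of_gt hMpos),
            Real.log_div (ne_of_gt (mul_pos hMpos (hpos x y))) (ne_of_gt hJpos),
            Real.log_mul (ne_of_gt hMpos) (ne_of_gt (hpos x y))]
          ring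
        rw [heq]
        have hlog : Real.log (M x * phat x y / J x y) ≤ M x * phat x y / J x y - 1 :=
          Real.log_le_sub_one_of_pos (div_pos (mul_pos hMpos (hpos x y)) hJpos)
        calc J x y * Real.log (M x * phat x y / J x y)
            ≤ J x y * (M x * phat x y / J x y - 1) :=
              mul_le_mul_of_nonneg_left hlog (hJ0 x y)
          _ = M x * phat x y - J x y := by field_simp
    calc ∑ x, ∑ y, J x y * (Real.log (phat x y) - Real.log (mixPred p n w x y))
        ≤ ∑ x, ∑ y, (M x * phat x y - J x y) :=
          Finset.sum_le_sum fun x _ => Finset.sum_le_sum fun y _ => hterm x y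
      _ = 0 := by
          rw [← Finset.sum_const_zero (s := (Finset.univ : Finset (Fin n → Fin ℓ → 𝒳)))]
          refine Finset.sum_congr rfl fun x _ => ?_
          rw [Finset.sum_sub_distrib, ← Finset.mul_sum, (hphat x).2, mul_one, hsumJ x, sub_self]
  -- assemble
  have hGle : ∫ θ, G θ ∂w ≤ C := by
    calc ∫ θ, G θ ∂w ≤ ∫ _, C ∂w := by
          refine integral_mono hGint (integrable_const C) (fun θ => ?_)
          rw [hG_reg θ]; exact hC θ
      _ = C := by simp
  calc condMI p n w = ∫ θ, F θ ∂w := hcondMI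
    _ = ∫ θ, (G θ + D θ) ∂w := integral_congr_ae hFGD
    _ = (∫ θ, G θ ∂w) + ∫ θ, D θ ∂w := integral_add hGint hDint
    _ ≤ C + 0 := by
        apply add_le_add hGle
        rw [hDval]; exact hGibbs
    _ = C := add_zero C
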